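/- Let n be a natural number and let φ be an automorphism of the symmetric group Sym_n (the group of all permutations of an n-element set). Then φ is an inner automorphism if and only if φ maps every transposition of Sym_n to a transposition. -/

import Mathlib

open Equiv Equiv.Perm

private lemma swap_sq_one {α : Type*} [DecidableEq α] {s : Perm α} (hs : s.IsSwap) :
    s * s = 1 := by
  obtain ⟨x, y, hxy, rfl⟩ := hs; exact Equiv.swap_mul_self x y

/-- Two transpositions whose product has order > 2 share a moved point. -/
private lemma exists_common_moved {α : Type*} [DecidableEq α] {s t : Perm α}
    (hs : s.IsSwap) (ht : t.IsSwap) (h : (s * t) * (s * t) ≠ 1) :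
    ∃ a, s a ≠ a ∧ t a ≠ a := by
  by_contra h'
  push_neg at h'
  have hd : Perm.Disjoint s t := fun x => or_iff_not_imp_left.2 (h' x)
  have hc := hd.commute
  apply h
  calc s * t * (s * t) = s * (t * s) * t := by group
    _ = s * (s * t) * t := by rw [hc.eq]
    _ = (s * s) * (t * t) := by group
    _ = 1 := by rw [swap_sq_one hs, swap_sq_one ht, one_mul]

/-- A transposition moving `a` is `swap a (s a)`. -/
private lemma swap_eq_of_moves {α : Type*} [DecidableEq α] {s : Perm α} (hs : s.IsSwap)
    {a : α} (ha : s a ≠ a) : s = Equiv.swap a (s a) := by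
  obtain ⟨x, y, hxy, rfl⟩ := hs
  rcases eq_or_ne a x with rfl | hax
  · rw [Equiv.swap_apply_left]
  rcases eq_or_ne a y with rfl | hay
  · rw [Equiv.swap_apply_right, Equiv.swap_comm]
  · exact absurd (Equiv.swap_apply_of_ne_of_ne hax hay) ha

private lemma moved_of_swap {α : Type*} [DecidableEq α] {x y a : α}
    (h : Equiv.swap x y a ≠ a) : a = x ∨ a = y := by
  by_contra h'
  push_neg at h'
  exact h (Equiv.swap_apply_of_ne_of_ne h'.1 h'.2)

/-- Extension: if `φ` agrees with conjugation by `g` on swaps, it agrees everywhere. -/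
private lemma ext_of_swaps {n : ℕ} (φ : Perm (Fin n) ≃* Perm (Fin n)) (g : Perm (Fin n))
    (h : ∀ σ : Perm (Fin n), σ.IsSwap → φ σ = g * σ * g⁻¹) :
    ∀ σ : Perm (Fin n), φ σ = g * σ * g⁻¹ := by
  intro σ
  have hσ : σ ∈ Subgroup.closure {σ : Perm (Fin n) | σ.IsSwap} := by
    rw [Equiv.Perm.closure_isSwap]; trivial
  induction hσ using Subgroup.closure_induction with
  | mem x hx => exact h x hx
  | one => simp
  | mul x y _ _ hx hy => rw [map_mul, hx, hy]; group
  | inv x _ hx => rw [map_inv, hx]; group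

/-- An automorphism of the symmetric group `Sym_n` is inner if and only if
it maps every transposition to a transposition. -/
theorem stmt_0 (n : ℕ) (φ : Equiv.Perm (Fin n) ≃* Equiv.Perm (Fin n)) :
    (∃ g : Equiv.Perm (Fin n), ∀ h : Equiv.Perm (Fin n), φ h = g⁻¹ * h * g) ↔
      (∀ σ : Equiv.Perm (Fin n), σ.IsSwap → (φ σ).IsSwap) := by
  constructor
  · rintro ⟨g, hg⟩ σ ⟨x, y, hxy, rfl⟩
    refine ⟨g⁻¹ x, g⁻¹ y, fun h => hxy (g⁻¹.injective h), ?_⟩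
    have h2 := Equiv.swap_apply_apply g⁻¹ x y
    rw [inv_inv] at h2
    rw [hg, ← h2]
  · intro hφ
    match n with
    | 0 =>
      exact ⟨1, fun h => Subsingleton.elim _ _⟩
    | 1 =>
      exact ⟨1, fun h => Subsingleton.elim _ _⟩
    | 2 =>
      refine ⟨1, fun h => ?_⟩
      rw [inv_one, one_mul, mul_one]
      have key : ∀ σ : Perm (Fin 2), σ.IsSwap → φ σ = σ := by
        intro σ hσ
        have h1 : ∀ x y : Fin 2, x ≠ y → Equiv.swap x y = Equiv.swap 0 1 := by decide
        obtain ⟨x, y, hxy, rfl⟩ := hσ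
        obtain ⟨u, v, huv, huv'⟩ := hφ _ ⟨x, y, hxy, rfl⟩
        rw [huv', h1 u v huv, h1 x y hxy]
      have := ext_of_swaps φ 1 (fun σ hσ => by rw [key σ hσ]; group)
      rw [this h]; group
    | (m + 3) =>
      have h01 : (0 : Fin (m + 3)) ≠ 1 := by simp [Fin.ext_iff]
      have h02 : (0 : Fin (m + 3)) ≠ 2 := by simp [Fin.ext_iff, Nat.mod_eq_of_lt (show 2 < m + 3 by omega)]
      have h12 : (1 : Fin (m + 3)) ≠ 2 := by simp [Fin.ext_iff, Nat.mod_eq_of_lt (show 2 < m + 3 by omega)]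
      -- τ k = swap 0 k is a transposition for k ≠ 0
      have hτswap : ∀ k : Fin (m + 3), k ≠ 0 → (Equiv.swap (0 : Fin (m + 3)) k).IsSwap :=
        fun k hk => ⟨0, k, Ne.symm hk, rfl⟩
      -- products of distinct τ's have order 3
      have hord : ∀ j k : Fin (m + 3), j ≠ 0 → k ≠ 0 → j ≠ k →
          (Equiv.swap (0 : Fin (m + 3)) j * Equiv.swap 0 k) * (Equiv.swap 0 j * Equiv.swap 0 k) ≠ 1 := by
        intro j k hj hk hjk h
        have := congrArg (fun σ : Perm (Fin (m + 3)) => σ 0) h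
        simp only [Perm.mul_apply, Perm.one_apply, Equiv.swap_apply_left] at this
        rw [Equiv.swap_apply_of_ne_of_ne hk hjk.symm, Equiv.swap_apply_right,
          Equiv.swap_apply_left] at this
        exact hj this
      have hshare : ∀ j k : Fin (m + 3), j ≠ 0 → k ≠ 0 → j ≠ k →
          ∃ a, φ (Equiv.swap 0 j) a ≠ a ∧ φ (Equiv.swap 0 k) a ≠ a := by
        intro j k hj hk hjk
        refine exists_common_moved (hφ _ (hτswap j hj)) (hφ _ (hτswap k hk)) ?_
        rw [← map_mul, ← map_mul]
        intro h
        apply hord j k hj hk hjk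
        have := φ.injective (h.trans (map_one φ).symm)
        exact this
      obtain ⟨a, ha1, ha2⟩ := hshare 1 2 (Ne.symm h01) (Ne.symm h02) h12
      -- every φ (swap 0 k) moves a
      have hmoves : ∀ k : Fin (m + 3), k ≠ 0 → φ (Equiv.swap 0 k) a ≠ a := by
        intro k hk
        rcases eq_or_ne k 1 with rfl | hk1
        · exact ha1
        rcases eq_or_ne k 2 with rfl | hk2
        · exact ha2
        intro hfix
        -- φ(swap 0 k) shares a point with both φ(swap 0 1) and φ(swap 0 2)
        obtain ⟨x, hx1, hxk⟩ := hshare 1 k (Ne.symm h01) hk (Ne.symm hk1)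
        obtain ⟨y, hy2, hyk⟩ := hshare 2 k (Ne.symm h02) hk (Ne.symm hk2)
        set b1 := φ (Equiv.swap 0 1) a with hb1
        set b2 := φ (Equiv.swap 0 2) a with hb2
        have hs1 : φ (Equiv.swap 0 1) = Equiv.swap a b1 :=
          swap_eq_of_moves (hφ _ (hτswap 1 (Ne.symm h01))) ha1
        have hs2 : φ (Equiv.swap 0 2) = Equiv.swap a b2 :=
          swap_eq_of_moves (hφ _ (hτswap 2 (Ne.symm h02))) ha2
        have hb1a : b1 ≠ a := ha1
        have hb2a : b2 ≠ a := ha2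
        have hb12 : b1 ≠ b2 := by
          intro h
          apply h12
          have : φ (Equiv.swap (0:Fin (m + 3)) 1) = φ (Equiv.swap 0 2) := by rw [hs1, hs2, h]
          have := φ.injective this
          have := congrArg (fun σ : Perm (Fin (m + 3)) => σ 0) this
          simpa using this
        -- x = b1 : x is moved by swap a b1 and by φ(swap 0 k) which fixes a
        have hxb1 : x = b1 := by
          rw [hs1] at hx1
          rcases moved_of_swap hx1 with rfl | rfl
          · exact absurd hfix hxk
          · rfl
        have hyb2 : y = b2 := by
          rw [hs2] at hy2
          rcases moved_of_swap hy2 with rfl | rfl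
          · exact absurd hfix hyk
          · rfl
        subst hxb1; subst hyb2
        -- φ(swap 0 k) = swap b1 b2
        have hk' : φ (Equiv.swap 0 k) = Equiv.swap b1 (φ (Equiv.swap 0 k) b1) :=
          swap_eq_of_moves (hφ _ (hτswap k hk)) hxk
        have hkb2 : φ (Equiv.swap 0 k) b1 = b2 := by
          rcases moved_of_swap (hk' ▸ hyk) with h | h
          · exact absurd h.symm hb12
          · exact h.symm
        rw [hkb2] at hk'
        -- but φ(swap 1 2) = swap b1 b2 too
        have h12' : φ (Equiv.swap (1 : Fin (m + 3)) 2) = Equiv.swap b1 b2 := by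
          have hconj : Equiv.swap (1 : Fin (m + 3)) 2
              = Equiv.swap 0 1 * Equiv.swap 0 2 * (Equiv.swap 0 1)⁻¹ := by
            rw [← Equiv.swap_apply_apply, Equiv.swap_apply_left,
              Equiv.swap_apply_of_ne_of_ne (Ne.symm h02) (Ne.symm h12)]
          rw [hconj, map_mul, map_mul, map_inv, hs1, hs2,
            ← Equiv.swap_apply_apply, Equiv.swap_apply_left,
            Equiv.swap_apply_of_ne_of_ne hb2a (Ne.symm hb12)]
        have : Equiv.swap (1 : Fin (m + 3)) 2 = Equiv.swap 0 k := φ.injective (h12'.trans hk'.symm)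
        have := congrArg (fun σ : Perm (Fin (m + 3)) => σ 0) this
        simp only [Equiv.swap_apply_left,
          Equiv.swap_apply_of_ne_of_ne h01 h02] at this
        exact hk this.symm
      -- define the conjugating permutation
      set f : Fin (m + 3) → Fin (m + 3) := fun k => if k = 0 then a else φ (Equiv.swap 0 k) a with hf
      have hinj : Function.Injective f := by
        intro j k h
        simp only [hf] at h
        rcases eq_or_ne j 0 with rfl | hj
        · rcases eq_or_ne k 0 with rfl | hk
          · rfl
          · rw [if_pos rfl, if_neg hk] at h
            exact absurd h.symm (hmoves k hk)
        rcases eq_or_ne k 0 with rfl | hk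
        · rw [if_neg hj, if_pos rfl] at h
          exact absurd h (hmoves j hj)
        rw [if_neg hj, if_neg hk] at h
        have hsj : φ (Equiv.swap 0 j) = Equiv.swap a (φ (Equiv.swap 0 j) a) :=
          swap_eq_of_moves (hφ _ (hτswap j hj)) (hmoves j hj)
        have hsk : φ (Equiv.swap 0 k) = Equiv.swap a (φ (Equiv.swap 0 k) a) :=
          swap_eq_of_moves (hφ _ (hτswap k hk)) (hmoves k hk)
        have : φ (Equiv.swap (0:Fin (m + 3)) j) = φ (Equiv.swap 0 k) := by rw [hsj, hsk, h]
        have := φ.injective this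
        have := congrArg (fun σ : Perm (Fin (m + 3)) => σ 0) this
        simpa using this
      set g : Perm (Fin (m + 3)) := Equiv.ofBijective f (Finite.injective_iff_bijective.mp hinj)
        with hg
      have hg0 : g 0 = a := by simp [hg, hf, Equiv.ofBijective]
      have hgk : ∀ k : Fin (m + 3), k ≠ 0 → g k = φ (Equiv.swap 0 k) a := by
        intro k hk; simp [hg, hf, Equiv.ofBijective, if_neg hk]
      have hτ : ∀ k : Fin (m + 3), k ≠ 0 → φ (Equiv.swap 0 k) = g * Equiv.swap 0 k * g⁻¹ := by
        intro k hk
        rw [← Equiv.swap_apply_apply, hg0, hgk k hk]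
        exact swap_eq_of_moves (hφ _ (hτswap k hk)) (hmoves k hk)
      have hswaps : ∀ σ : Perm (Fin (m + 3)), σ.IsSwap → φ σ = g * σ * g⁻¹ := by
        rintro σ ⟨x, y, hxy, rfl⟩
        rcases eq_or_ne x 0 with rfl | hx
        · exact hτ y (Ne.symm hxy)
        rcases eq_or_ne y 0 with rfl | hy
        · rw [Equiv.swap_comm]; exact hτ x hx
        have hconj : Equiv.swap x y
            = Equiv.swap 0 x * Equiv.swap 0 y * (Equiv.swap 0 x)⁻¹ := by
          rw [← Equiv.swap_apply_apply, Equiv.swap_apply_left,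
            Equiv.swap_apply_of_ne_of_ne hy (Ne.symm hxy)]
        rw [hconj, map_mul, map_mul, map_inv, hτ x hx, hτ y hy]
        group
      refine ⟨g⁻¹, fun h => ?_⟩
      rw [inv_inv]
      exact ext_of_swaps φ g hswaps h
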